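/- arXiv:1408.5949 — 2 statements merged into one kernel-verified Lean document; each statement's English description precedes it below -/
import Mathlib

section
/- If D is a triangulated disk with a good ordering T₁,...,T_m such that the boundary lengths |∂I₁| < |∂I₂| < ... < |∂I_m| are strictly increasing, then the dual graph of the triangulation of D is a tree. -/
open Finset

namespace TriSphere

variable {V : Type} [Fintype V] [DecidableEq V]

/-- The set of vertices of a set of faces. -/
def verts (F : Finset (Finset V)) : Finset V := F.biUnion id

/-- The edges of a set of (triangular) faces: the 2-element subsets of faces. -/
def edgs (F : Finset (Finset V)) : Finset (Finset V) :=
  F.biUnion fun f => f.powersetCard 2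

/-- The faces of `F` containing a given edge. -/
def facesOn (F : Finset (Finset V)) (e : Finset V) : Finset (Finset V) :=
  F.filter fun f => e ⊆ f

/-- Boundary edges: edges contained in exactly one face. -/
def bdryEdges (F : Finset (Finset V)) : Finset (Finset V) :=
  (edgs F).filter fun e => (facesOn F e).card = 1

/-- Boundary vertices. -/
def bdryVerts (F : Finset (Finset V)) : Finset V := (bdryEdges F).biUnion id

/-- The length of the boundary: the number of boundary vertices. -/
def bdryLen (F : Finset (Finset V)) : ℕ := (bdryVerts F).card

/-- The dual graph of a set of faces: two faces are adjacent iff they share an edge. -/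
def dualGraph (F : Finset (Finset V)) : SimpleGraph {f // f ∈ F} where
  Adj f g := f ≠ g ∧ (f.1 ∩ g.1).card = 2
  symm := ⟨fun f g h => ⟨h.1.symm, by rw [Finset.inter_comm]; exact h.2⟩⟩
  loopless := ⟨fun f h => h.1 rfl⟩

instance (F : Finset (Finset V)) : DecidableRel (dualGraph F).Adj :=
  fun f g => inferInstanceAs (Decidable (f ≠ g ∧ (f.1 ∩ g.1).card = 2))

/-- A combinatorial disk: a nonempty, dually connected set of triangles, each edge on at
most two faces, with Euler characteristic 1. -/
def IsDisk (F : Finset (Finset V)) : Prop :=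
  F.Nonempty ∧ (∀ f ∈ F, f.card = 3) ∧ (dualGraph F).Connected ∧
    (∀ e ∈ edgs F, (facesOn F e).card ≤ 2) ∧
    ((verts F).card : ℤ) - (edgs F).card + F.card = 1

/-- A simplicial triangulation of the 2-sphere: a closed simplicial surface
(every edge on exactly two faces, vertex links connected, dual graph connected)
with Euler characteristic 2. -/
structure SphereTri (V : Type) [Fintype V] [DecidableEq V] where
  faces : Finset (Finset V)
  nonempty : faces.Nonempty
  card3 : ∀ f ∈ faces, f.card = 3
  edge2 : ∀ e ∈ edgs faces, (facesOn faces e).card = 2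
  dualConn : (dualGraph faces).Connected
  linkConn : ∀ v : V, ∀ f ∈ faces, ∀ g ∈ faces, v ∈ f → v ∈ g →
    Relation.ReflTransGen
      (fun a b : Finset V => a ∈ faces ∧ b ∈ faces ∧ v ∈ a ∧ v ∈ b ∧ (a ∩ b).card = 2) f g
  euler : ((verts faces).card : ℤ) - (edgs faces).card + faces.card = 2
  allVerts : verts faces = Finset.univ

/-- The 1-skeleton of a triangulation of the sphere. -/
def skel (T : SphereTri V) : SimpleGraph V where
  Adj u v := u ≠ v ∧ ({u, v} : Finset V) ∈ edgs T.faces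
  symm := ⟨fun u v h => ⟨h.1.symm, by rw [Finset.pair_comm]; exact h.2⟩⟩
  loopless := ⟨fun u h => h.1 rfl⟩

/-- The three edges of a triangle. -/
def faceEdges (f : Finset V) : Finset (Finset V) := f.powersetCard 2

/-- An unordered pair, as a 2-element finset. -/
def symEdge (e : Sym2 V) : Finset V :=
  Sym2.lift ⟨fun a b => ({a, b} : Finset V), fun a b => Finset.pair_comm a b⟩ e

/-- The set of edges of a closed walk (e.g. of an embedded cycle). -/
def cycleEdges (T : SphereTri V) {v : V} (c : (skel T).Walk v v) : Finset (Finset V) :=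
  c.edges.toFinset.image symEdge

/-- The face `f` provides a shortening move for the cycle `c`: `f` meets `c` in exactly
two (necessarily adjacent) edges.  (A face meeting `c` in one edge gives a lengthening.) -/
def Shortens (T : SphereTri V) {v : V} (c : (skel T).Walk v v) (f : Finset V) : Prop :=
  f ∈ T.faces ∧ (faceEdges f ∩ cycleEdges T c).card = 2

/-- The cycle `c` is the boundary of a triangle of `T`. -/
def IsTriBdry (T : SphereTri V) {v : V} (c : (skel T).Walk v v) : Prop :=
  ∃ f ∈ T.faces, cycleEdges T c = faceEdges f

/-- A stable geodesic: an embedded cycle admitting no shortening move which is not the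
boundary of a triangle. -/
def StableGeodesic (T : SphereTri V) {v : V} (c : (skel T).Walk v v) : Prop :=
  c.IsCycle ∧ (∀ f, ¬ Shortens T c f) ∧ ¬ IsTriBdry T c

/-- Two faces are on the same side of the cycle `c` if they are joined by a dual path
which never crosses an edge of `c`. -/
def SameSide (T : SphereTri V) {v : V} (c : (skel T).Walk v v) (f g : Finset V) : Prop :=
  Relation.ReflTransGen
    (fun a b : Finset V => a ∈ T.faces ∧ b ∈ T.faces ∧ (a ∩ b).card = 2 ∧
      (a ∩ b) ∉ cycleEdges T c) f g

/-- Two faces on opposite sides of the cycle `c`. -/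
def OppSides (T : SphereTri V) {v : V} (c : (skel T).Walk v v) (f g : Finset V) : Prop :=
  f ∈ T.faces ∧ g ∈ T.faces ∧ ¬ SameSide T c f g

/-- An unstable geodesic: a cycle with shortening moves on both sides, such that every
pair of shortening moves on opposite sides uses triangles meeting in an edge of the cycle
(so the two moves cannot be performed simultaneously). -/
def UnstableGeodesic (T : SphereTri V) {v : V} (c : (skel T).Walk v v) : Prop :=
  c.IsCycle ∧
  (∃ f g, Shortens T c f ∧ Shortens T c g ∧ OppSides T c f g) ∧
  (∀ f g, Shortens T c f → Shortens T c g → OppSides T c f g →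
    ∃ e ∈ cycleEdges T c, e ⊆ f ∧ e ⊆ g)

/-- `seq L k = |∂ I_k|`, the boundary length of the union of the first `k` triangles. -/
def seq (L : List (Finset V)) (k : ℕ) : ℕ := bdryLen (L.take k).toFinset

/-- A good ordering of the faces `F`: every proper partial union is a disk. -/
def Good (F : Finset (Finset V)) (L : List (Finset V)) : Prop :=
  L.Nodup ∧ L.toFinset = F ∧
    ∀ k, 1 ≤ k → k < L.length → IsDisk (L.take k).toFinset

/-- `|∂ I_j|` is a local maximum of the ordering (with `|∂ I_0| = |∂ I_n| = 0`). -/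
def LocalMaxAt (L : List (Finset V)) (j : ℕ) : Prop :=
  1 ≤ j ∧ j < L.length ∧ seq L (j - 1) < seq L j ∧ seq L (j + 1) < seq L j

/-- `|∂ I_j|` is a local minimum of the ordering. -/
def LocalMinAt (L : List (Finset V)) (j : ℕ) : Prop :=
  1 ≤ j ∧ j < L.length ∧ seq L j < seq L (j - 1) ∧ seq L j < seq L (j + 1)

instance (L : List (Finset V)) : DecidablePred (LocalMaxAt L) := fun _ =>
  inferInstanceAs (Decidable (_ ∧ _ ∧ _ ∧ _))
instance (L : List (Finset V)) : DecidablePred (LocalMinAt L) := fun _ =>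
  inferInstanceAs (Decidable (_ ∧ _ ∧ _ ∧ _))

/-- The indices of the local maxima of an ordering. -/
def maxIndices (L : List (Finset V)) : List ℕ :=
  (List.range L.length).filter fun j => decide (LocalMaxAt L j)

/-- The indices of the local minima of an ordering. -/
def minIndices (L : List (Finset V)) : List ℕ :=
  (List.range L.length).filter fun j => decide (LocalMinAt L j)

/-- The width of an ordering: the list of values of its local maxima, sorted
in decreasing order (so widths are compared lexicographically). -/
def widthList (L : List (Finset V)) : List ℕ :=
  List.insertionSort (· ≥ ·) ((maxIndices L).map (seq L))

/-- A thin ordering: a good ordering minimizing the width lexicographically. -/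
def Thin (F : Finset (Finset V)) (L : List (Finset V)) : Prop :=
  Good F L ∧ ∀ L', Good F L' → ¬ List.Lex (· < ·) (widthList L') (widthList L)

/-- Bridge position: a good ordering with a single local maximum and no local minima. -/
def Bridge (F : Finset (Finset V)) (L : List (Finset V)) : Prop :=
  Good F L ∧ (∃! j, LocalMaxAt L j) ∧ ∀ j, ¬ LocalMinAt L j

/-- A wheel: a triangulated disk whose dual graph is a cycle (connected, all degrees 2). -/
def IsWheel (F : Finset (Finset V)) : Prop :=
  3 ≤ F.card ∧ (dualGraph F).Connected ∧ ∀ f, (dualGraph F).degree f = 2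

end TriSphere


namespace TriSphere

set_option linter.unusedSectionVars false
variable {V : Type} [Fintype V] [DecidableEq V]

lemma edgs_card_two {F : Finset (Finset V)} {e : Finset V} (he : e ∈ edgs F) : e.card = 2 := by
  simp only [edgs, mem_biUnion] at he
  obtain ⟨f, _, hf⟩ := he
  exact (Finset.mem_powersetCard.1 hf).2

lemma facesOn_nonempty {F : Finset (Finset V)} {e : Finset V} (he : e ∈ edgs F) :
    (facesOn F e).Nonempty := by
  simp only [edgs, mem_biUnion] at he
  obtain ⟨f, hfF, hf⟩ := he
  exact ⟨f, Finset.mem_filter.2 ⟨hfF, (Finset.mem_powersetCard.1 hf).1⟩⟩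

lemma filter_edgs_eq {F : Finset (Finset V)} {f : Finset V} (hf : f ∈ F) :
    (edgs F).filter (· ⊆ f) = f.powersetCard 2 := by
  ext e
  simp only [Finset.mem_filter, Finset.mem_powersetCard, edgs, mem_biUnion]
  constructor
  · rintro ⟨⟨g, hg, hge⟩, hef⟩
    exact ⟨hef, hge.2⟩
  · rintro ⟨hef, hcard⟩
    exact ⟨⟨f, hf, ⟨hef, hcard⟩⟩, hef⟩

lemma sum_facesOn {F : Finset (Finset V)} (h3 : ∀ f ∈ F, f.card = 3) :
    ∑ e ∈ edgs F, (facesOn F e).card = 3 * F.card := by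
  have : ∀ e ∈ edgs F, (facesOn F e).card = ∑ f ∈ F, if e ⊆ f then 1 else 0 := by
    intro e _
    rw [facesOn, Finset.card_filter]
  rw [Finset.sum_congr rfl this, Finset.sum_comm]
  have : ∀ f ∈ F, (∑ e ∈ edgs F, if e ⊆ f then 1 else 0) = 3 := by
    intro f hf
    rw [← Finset.card_filter, filter_edgs_eq hf, Finset.card_powersetCard, h3 f hf]
    rfl
  rw [Finset.sum_congr rfl this, Finset.sum_const, smul_eq_mul, mul_comm]

/-- number of interior edges -/
lemma interior_count {F : Finset (Finset V)} (h3 : ∀ f ∈ F, f.card = 3)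
    (h2 : ∀ e ∈ edgs F, (facesOn F e).card ≤ 2) :
    (edgs F).card + ((edgs F).filter fun e => (facesOn F e).card = 2).card = 3 * F.card := by
  rw [← sum_facesOn h3]
  rw [Finset.card_filter]
  rw [show #(edgs F) = ∑ _e ∈ edgs F, 1 from (Finset.card_eq_sum_ones _), ← Finset.sum_add_distrib]
  refine Finset.sum_congr rfl fun e he => ?_
  have h1 := (facesOn_nonempty he).card_pos
  have := h2 e he
  interval_cases h : (facesOn F e).card <;> simp [h]

end TriSphere

namespace TriSphere
set_option linter.unusedSectionVars false
variable {V : Type} [Fintype V] [DecidableEq V]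

lemma mem_facesOn {F : Finset (Finset V)} {e f : Finset V} (hf : f ∈ F) (hef : e ⊆ f) :
    f ∈ facesOn F e := Finset.mem_filter.2 ⟨hf, hef⟩

lemma inter_mem_edgs {F : Finset (Finset V)} {f g : Finset V} (hf : f ∈ F)
    (hcard : (f ∩ g).card = 2) : f ∩ g ∈ edgs F := by
  simp only [edgs, mem_biUnion]
  exact ⟨f, hf, Finset.mem_powersetCard.2 ⟨Finset.inter_subset_left, hcard⟩⟩

lemma facesOn_eq_pair {F : Finset (Finset V)} (h2 : ∀ e ∈ edgs F, (facesOn F e).card ≤ 2)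
    {e f g : Finset V} (he : e ∈ edgs F) (hf : f ∈ facesOn F e) (hg : g ∈ facesOn F e)
    (hfg : f ≠ g) : facesOn F e = {f, g} := by
  have hsub : ({f, g} : Finset (Finset V)) ⊆ facesOn F e := by
    intro x hx
    rcases Finset.mem_insert.1 hx with rfl | hx
    · exact hf
    · rw [Finset.mem_singleton] at hx; subst hx; exact hg
  have hcard : ({f, g} : Finset (Finset V)).card = 2 := Finset.card_pair hfg
  exact (Finset.eq_of_subset_of_card_le hsub (by rw [hcard]; exact h2 e he)).symm

lemma inter_card_le_two {F : Finset (Finset V)} (h3 : ∀ f ∈ F, f.card = 3)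
    {f g : Finset V} (hf : f ∈ F) (hg : g ∈ F) (hfg : f ≠ g) : (f ∩ g).card ≤ 2 := by
  by_contra h
  push_neg at h
  have h1 : (f ∩ g).card ≤ f.card := Finset.card_le_card Finset.inter_subset_left
  rw [h3 f hf] at h1
  have : f ∩ g = f := Finset.eq_of_subset_of_card_le Finset.inter_subset_left
    (by rw [h3 f hf]; omega)
  have hsub : f ⊆ g := by rw [← this]; exact Finset.inter_subset_right
  exact hfg (Finset.eq_of_subset_of_card_le hsub (by rw [h3 f hf, h3 g hg]))

lemma pair_eq_pair_iff' {α : Type*} [DecidableEq α] {a b c d : α} :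
    ({a, b} : Finset α) = {c, d} ↔ a = c ∧ b = d ∨ a = d ∧ b = c := by
  rw [← Finset.coe_inj]
  simp only [Finset.coe_insert, Finset.coe_singleton]
  exact Set.pair_eq_pair_iff

lemma dual_edgeFinset_card {F : Finset (Finset V)} (h3 : ∀ f ∈ F, f.card = 3)
    (h2 : ∀ e ∈ edgs F, (facesOn F e).card ≤ 2) :
    (dualGraph F).edgeFinset.card
      = ((edgs F).filter fun e => (facesOn F e).card = 2).card := by
  refine Finset.card_bij
    (fun z _ => Sym2.lift ⟨fun a b => a.1 ∩ b.1, fun a b => Finset.inter_comm _ _⟩ z) ?_ ?_ ?_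
  · -- maps into
    intro z hz
    induction z with
    | _ a b =>
      rw [SimpleGraph.mem_edgeFinset, SimpleGraph.mem_edgeSet] at hz
      obtain ⟨hne, hcard⟩ := hz
      simp only [Sym2.lift_mk]
      have hmem : a.1 ∩ b.1 ∈ edgs F := inter_mem_edgs a.2 hcard
      refine Finset.mem_filter.2 ⟨hmem, ?_⟩
      have hne' : a.1 ≠ b.1 := fun h => hne (Subtype.ext h)
      have hfa : a.1 ∈ facesOn F (a.1 ∩ b.1) := mem_facesOn a.2 Finset.inter_subset_left
      have hfb : b.1 ∈ facesOn F (a.1 ∩ b.1) := mem_facesOn b.2 Finset.inter_subset_right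
      rw [facesOn_eq_pair h2 hmem hfa hfb hne']
      exact Finset.card_pair hne'
  · -- injective
    intro z hz z' hz' heq
    induction z with
    | _ a b =>
    induction z' with
    | _ c d =>
      rw [SimpleGraph.mem_edgeFinset, SimpleGraph.mem_edgeSet] at hz hz'
      obtain ⟨hne1, hc1⟩ := hz
      obtain ⟨hne2, hc2⟩ := hz'
      simp only [Sym2.lift_mk] at heq
      have hne1' : a.1 ≠ b.1 := fun h => hne1 (Subtype.ext h)
      have hne2' : c.1 ≠ d.1 := fun h => hne2 (Subtype.ext h)
      have hmem : a.1 ∩ b.1 ∈ edgs F := inter_mem_edgs a.2 hc1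
      have h1 : facesOn F (a.1 ∩ b.1) = {a.1, b.1} :=
        facesOn_eq_pair h2 hmem (mem_facesOn a.2 Finset.inter_subset_left)
          (mem_facesOn b.2 Finset.inter_subset_right) hne1'
      have h2' : facesOn F (a.1 ∩ b.1) = {c.1, d.1} := by
        rw [heq]
        exact facesOn_eq_pair h2 (heq ▸ hmem) (mem_facesOn c.2 Finset.inter_subset_left)
          (mem_facesOn d.2 Finset.inter_subset_right) hne2'
      rw [h1] at h2'
      rw [Sym2.eq_iff]
      have := pair_eq_pair_iff'.1 h2'
      rcases this with ⟨hac, hbd⟩ | ⟨had, hbc⟩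
      · exact Or.inl ⟨Subtype.ext hac, Subtype.ext hbd⟩
      · exact Or.inr ⟨Subtype.ext had, Subtype.ext hbc⟩
  · -- surjective
    intro e he
    obtain ⟨hee, hfo⟩ := Finset.mem_filter.1 he
    obtain ⟨f, g, hfg, hpair⟩ := Finset.card_eq_two.1 hfo
    have hfF : f ∈ facesOn F e := hpair ▸ Finset.mem_insert_self _ _
    have hgF : g ∈ facesOn F e := hpair ▸ Finset.mem_insert_of_mem (Finset.mem_singleton_self _)
    obtain ⟨hfF', hef⟩ := Finset.mem_filter.1 hfF
    obtain ⟨hgF', heg⟩ := Finset.mem_filter.1 hgF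
    have hein : e ⊆ f ∩ g := Finset.subset_inter hef heg
    have hle : (f ∩ g).card ≤ 2 := inter_card_le_two h3 hfF' hgF' hfg
    have hecard : e.card = 2 := edgs_card_two hee
    have hfeq : e = f ∩ g := Finset.eq_of_subset_of_card_le hein (by omega)
    refine ⟨s(⟨f, hfF'⟩, ⟨g, hgF'⟩), ?_, ?_⟩
    · rw [SimpleGraph.mem_edgeFinset, SimpleGraph.mem_edgeSet]
      exact ⟨fun h => hfg (congrArg Subtype.val h), by rw [← hfeq]; exact hecard⟩
    · simp only [Sym2.lift_mk]
      exact hfeq.symm ▸ rfl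

end TriSphere

namespace TriSphere
set_option linter.unusedSectionVars false
variable {V : Type} [Fintype V] [DecidableEq V]

lemma bdryVerts_subset (F : Finset (Finset V)) : bdryVerts F ⊆ verts F := by
  intro x hx
  simp only [bdryVerts, mem_biUnion, id] at hx
  obtain ⟨e, he, hxe⟩ := hx
  have he' : e ∈ edgs F := Finset.mem_of_mem_filter _ he
  simp only [edgs, mem_biUnion] at he'
  obtain ⟨f, hf, hef⟩ := he'
  simp only [verts, mem_biUnion, id]
  exact ⟨f, hf, (Finset.mem_powersetCard.1 hef).1 hxe⟩

lemma bdryLen_singleton {f : Finset V} (h3 : f.card = 3) : bdryLen {f} = 3 := by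
  have hedgs : edgs ({f} : Finset (Finset V)) = f.powersetCard 2 := by
    simp [edgs]
  have hbe : bdryEdges ({f} : Finset (Finset V)) = f.powersetCard 2 := by
    rw [bdryEdges, hedgs]
    refine Finset.filter_true_of_mem fun e he => ?_
    have : facesOn ({f} : Finset (Finset V)) e = {f} := by
      rw [facesOn]
      refine Finset.filter_true_of_mem fun g hg => ?_
      rw [Finset.mem_singleton] at hg
      subst hg
      exact (Finset.mem_powersetCard.1 he).1
    rw [this, Finset.card_singleton]
  have hbv : bdryVerts ({f} : Finset (Finset V)) = f := by
    rw [bdryVerts, hbe]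
    ext x
    simp only [mem_biUnion, id, Finset.mem_powersetCard]
    constructor
    · rintro ⟨e, ⟨hef, _⟩, hxe⟩
      exact hef hxe
    · intro hx
      obtain ⟨y, hy, hyx⟩ := Finset.exists_mem_ne (s := f) (by omega) x
      exact ⟨{x, y}, ⟨Finset.insert_subset hx (Finset.singleton_subset_iff.2 hy),
        Finset.card_pair (Ne.symm hyx)⟩, Finset.mem_insert_self _ _⟩
  rw [bdryLen, hbv, h3]

end TriSphere

open SimpleGraph in
private lemma reach_of_walk {W : Type} {G H : SimpleGraph W}
    (hAdj : ∀ a b, G.Adj a b → H.Reachable a b) {x y : W} (p : G.Walk x y) :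
    H.Reachable x y := by
  induction p with
  | nil => exact Reachable.refl _
  | cons h _ ih => exact (hAdj _ _ h).trans ih

open SimpleGraph in
private lemma connected_delete {W : Type} {G : SimpleGraph W} {v w : W}
    (hc : G.Connected) (hr : (G \ fromEdgeSet {s(v, w)}).Reachable v w) :
    (G \ fromEdgeSet {s(v, w)}).Connected := by
  have hne := hc.nonempty
  refine ⟨fun x y => ?_⟩
  obtain ⟨p⟩ := hc.preconnected x y
  refine reach_of_walk (fun a b hab => ?_) p
  by_cases he : s(a, b) = s(v, w)
  · rw [Sym2.eq_iff] at he
    rcases he with ⟨rfl, rfl⟩ | ⟨rfl, rfl⟩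
    · exact hr
    · exact hr.symm
  · exact Adj.reachable (by simp [sdiff_adj, hab, fromEdgeSet_adj, he])

open SimpleGraph in
private lemma isTree_of_le {W : Type} [Fintype W] (G : SimpleGraph W)
    (hc : G.Connected) (hle : G.edgeSet.ncard ≤ Fintype.card W - 1) : G.IsTree := by
  classical
  generalize hn : G.edgeSet.ncard = n at hle
  induction n using Nat.strong_induction_on generalizing G with
  | _ n ih =>
  by_cases hac : G.IsAcyclic
  · exact ⟨hc, hac⟩
  · exfalso
    simp only [IsAcyclic, not_forall, not_not] at hac
    obtain ⟨u, c, hcyc⟩ := hac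
    have hlen := hcyc.three_le_length
    have hne : c.edges ≠ [] := by
      intro h
      have := c.length_edges
      rw [h] at this
      simp at this
      omega
    obtain ⟨e, he⟩ := List.exists_mem_of_ne_nil _ hne
    induction e with
    | _ v w =>
    have hr : G.Adj v w ∧ (G \ fromEdgeSet {s(v, w)}).Reachable v w :=
      (adj_and_reachable_delete_edges_iff_exists_cycle).2 ⟨u, c, hcyc, he⟩
    set G' := G \ fromEdgeSet {s(v, w)} with hG'
    have hconn' : G'.Connected := connected_delete hc hr.2
    have hes : G'.edgeSet = G.edgeSet \ {s(v, w)} := by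
      rw [hG', edgeSet_sdiff, edgeSet_fromEdgeSet, edgeSet_sdiff_sdiff_isDiag]
    have hmem : s(v, w) ∈ G.edgeSet := hr.1
    have hn1 : 1 ≤ n := by
      rw [← hn]
      have : G.edgeSet.Nonempty := ⟨_, hmem⟩
      have := this.ncard_pos (Set.toFinite _)
      omega
    have hn' : G'.edgeSet.ncard = n - 1 := by
      rw [hes, Set.ncard_diff_singleton_of_mem hmem, hn]
    have htree : G'.IsTree := ih (n - 1) (by omega) G' hconn' hn' (by omega)
    have := htree.card_edgeFinset
    rw [← Set.ncard_coe_finset, SimpleGraph.coe_edgeFinset] at this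
    omega

open TriSphere in
/-- If a triangulated disk has a good ordering whose boundary lengths are
strictly increasing, then its dual graph is a tree. -/
theorem strictly_increasing_good_ordering_dual_tree {V : Type} [Fintype V] [DecidableEq V]
    (F : Finset (Finset V)) (L : List (Finset V)) (hF : IsDisk F) (hL : Good F L)
    (hmono : ∀ k, 1 ≤ k → k < L.length → seq L k < seq L (k + 1)) :
    (dualGraph F).IsTree := by
  classical
  obtain ⟨hnodup, htf, hgood⟩ := hL
  obtain ⟨hne, h3, hconn, h2, heuler⟩ := hF
  have hmpos : 1 ≤ F.card := Finset.card_pos.2 hne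
  have hlen : L.length = F.card := by rw [← htf, List.toFinset_card_of_nodup hnodup]
  have hL1 : seq L 1 = 3 := by
    obtain ⟨f, rest, rfl⟩ : ∃ f rest, L = f :: rest := by
      cases L with
      | nil => simp at hlen; omega
      | cons f rest => exact ⟨f, rest, rfl⟩
    have hf : f ∈ F := by rw [← htf]; simp
    rw [seq, show (f :: rest).take 1 = [f] from rfl]
    simp only [List.toFinset_cons, List.toFinset_nil, LawfulSingleton.insert_empty_eq]
    exact bdryLen_singleton (h3 f hf)
  have hstep : ∀ k, 1 ≤ k → k ≤ L.length → k + 2 ≤ seq L k := by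
    intro k
    induction k with
    | zero => omega
    | succ n ih =>
      intro _ hk
      by_cases hn0 : n = 0
      · subst hn0
        simp only [Nat.zero_add]
        omega
      · have h1 := hmono n (by omega) (by omega)
        have h2 := ih (by omega) (by omega)
        omega
  have hvge : F.card + 2 ≤ (verts F).card := by
    have h1 := hstep L.length (by omega) le_rfl
    rw [seq, List.take_length, htf, bdryLen] at h1
    have h2' := Finset.card_le_card (bdryVerts_subset F)
    omega
  have hcount := interior_count h3 h2
  have hdual := dual_edgeFinset_card h3 h2
  have hble : ((edgs F).filter fun e => (facesOn F e).card = 2).card ≤ F.card - 1 := by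
    omega
  refine isTree_of_le _ hconn ?_
  have hfc : Fintype.card {f // f ∈ F} = F.card := Fintype.card_coe F
  have hnc : (dualGraph F).edgeSet.ncard = (dualGraph F).edgeFinset.card :=
    Set.ncard_eq_toFinset_card' _
  rw [hnc, hdual, hfc]
  exact hble
end

section
/- In the tetrahedral triangulation of the 2-sphere, there are exactly three embedded cycles of length four in the 1-skeleton, and each is an unstable geodesic. -/
open Finset

set_option linter.unusedSectionVars false
section Aux
open TriSphere
variable {V : Type} [Fintype V] [DecidableEq V]

lemma pairEq (x y u w : V) : ({x,y}:Finset V) = {u,w} ↔ (x=u∧y=w)∨(x=w∧y=u) := by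
  rw [← Finset.coe_inj]
  simp only [Finset.coe_insert, Finset.coe_singleton]
  exact Set.pair_eq_pair_iff

lemma univ_eq4 (hV : Fintype.card V = 4) (v a b d : V)
    (h1 : v ≠ a) (h2 : v ≠ b) (h3 : v ≠ d) (h4 : a ≠ b) (h5 : a ≠ d) (h6 : b ≠ d) :
    (Finset.univ : Finset V) = {v,a,b,d} := by
  symm
  apply Finset.eq_univ_of_card
  rw [hV, Finset.card_insert_of_notMem (by simp [h1, h2, h3]),
    Finset.card_insert_of_notMem (by simp [h4, h5]),
    Finset.card_insert_of_notMem (by simp [h6]), Finset.card_singleton]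

lemma compl_pair (hV : Fintype.card V = 4) (v a b d : V)
    (h1 : v ≠ a) (h2 : v ≠ b) (h3 : v ≠ d) (h4 : a ≠ b) (h5 : a ≠ d) (h6 : b ≠ d) :
    (Finset.univ : Finset V) \ {v,b} = {a,d} := by
  rw [univ_eq4 hV v a b d h1 h2 h3 h4 h5 h6]
  ext t
  simp only [Finset.mem_sdiff, Finset.mem_insert, Finset.mem_singleton]
  constructor
  · rintro ⟨rfl|rfl|rfl|rfl, ht⟩ <;> tauto
  · rintro (rfl|rfl) <;> constructor <;> tauto

set_option maxHeartbeats 1000000 in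
lemma S_formula (hV : Fintype.card V = 4) (v a b d : V)
    (h1 : v ≠ a) (h2 : v ≠ b) (h3 : v ≠ d) (h4 : a ≠ b) (h5 : a ≠ d) (h6 : b ≠ d) :
    ({({v,a}:Finset V),{a,b},{b,d},{d,v}} : Finset (Finset V))
      = (Finset.univ : Finset V).powersetCard 2 \ {({v,b}:Finset V), {a,d}} := by
  have hu := univ_eq4 hV v a b d h1 h2 h3 h4 h5 h6
  ext t
  simp only [Finset.mem_insert, Finset.mem_singleton, Finset.mem_sdiff,
    Finset.mem_powersetCard]
  constructor
  · rintro (rfl|rfl|rfl|rfl) <;>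
      refine ⟨⟨Finset.subset_univ _, Finset.card_pair (by tauto)⟩, ?_⟩ <;>
      · simp only [pairEq]
        tauto
  · rintro ⟨⟨hsub, hcard⟩, hne⟩
    obtain ⟨p, q, hpq, rfl⟩ := Finset.card_eq_two.1 hcard
    have hp : p ∈ ({v,a,b,d}:Finset V) := hu ▸ hsub (by simp)
    have hq : q ∈ ({v,a,b,d}:Finset V) := hu ▸ hsub (by simp)
    simp only [Finset.mem_insert, Finset.mem_singleton] at hp hq
    simp only [pairEq] at hne ⊢
    rcases hp with rfl|rfl|rfl|rfl <;> rcases hq with rfl|rfl|rfl|rfl <;> simp_all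

end Aux

section Aux2
open TriSphere SimpleGraph
variable {V : Type} [Fintype V] [DecidableEq V]

lemma tri_edges (x y z : V) (hxy : x ≠ y) (hxz : x ≠ z) (hyz : y ≠ z) :
    ({x,y,z}:Finset V).powersetCard 2 = {({x,y}:Finset V),{x,z},{y,z}} := by
  ext t
  simp only [Finset.mem_powersetCard, Finset.mem_insert, Finset.mem_singleton]
  constructor
  · rintro ⟨hsub, hcard⟩
    obtain ⟨p, q, hpq, rfl⟩ := Finset.card_eq_two.1 hcard
    have hp : p ∈ ({x,y,z}:Finset V) := hsub (by simp)
    have hq : q ∈ ({x,y,z}:Finset V) := hsub (by simp)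
    simp only [Finset.mem_insert, Finset.mem_singleton] at hp hq
    simp only [pairEq]
    rcases hp with rfl|rfl|rfl <;> rcases hq with rfl|rfl|rfl <;> simp_all
  · rintro (rfl|rfl|rfl) <;>
      exact ⟨by intro u hu; simp only [Finset.mem_insert, Finset.mem_singleton] at hu ⊢; tauto,
        Finset.card_pair (by tauto)⟩

lemma adj_of_ne (T : SphereTri V) (hV : Fintype.card V = 4)
    (hfaces : T.faces = Finset.univ.powersetCard 3) {u w : V} (huw : u ≠ w) :
    (skel T).Adj u w := by
  refine ⟨huw, ?_⟩
  have hcard : ({u,w}:Finset V).card = 2 := Finset.card_pair huw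
  have hne : (({u,w}:Finset V)ᶜ).Nonempty := by
    rw [← Finset.card_pos, Finset.card_compl, hcard, hV]; norm_num
  obtain ⟨x, hx⟩ := hne
  rw [Finset.mem_compl] at hx
  refine Finset.mem_biUnion.2 ⟨insert x {u,w}, ?_, ?_⟩
  · rw [hfaces, Finset.mem_powersetCard]
    exact ⟨Finset.subset_univ _, by rw [Finset.card_insert_of_notMem hx, hcard]⟩
  · rw [Finset.mem_powersetCard]
    exact ⟨Finset.subset_insert _ _, hcard⟩

lemma cycle_struct (T : SphereTri V) {v : V} (c : (skel T).Walk v v)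
    (hc : c.IsCycle) (hl : c.length = 4) :
    ∃ a b d : V, v ≠ a ∧ v ≠ b ∧ v ≠ d ∧ a ≠ b ∧ a ≠ d ∧ b ≠ d ∧
      cycleEdges T c = {({v,a}:Finset V),{a,b},{b,d},{d,v}} := by
  cases c with
  | nil => simp at hl
  | cons h1 p =>
  rename_i a
  cases p with
  | nil => simp at hl
  | cons h2 p =>
  rename_i b
  cases p with
  | nil => simp at hl
  | cons h3 p =>
  rename_i d
  cases p with
  | nil => simp at hl
  | cons h4 p =>
  rename_i e
  cases p with
  | cons h5 p => simp [SimpleGraph.Walk.length_cons] at hl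
  | nil =>
    have hnd := hc.support_nodup
    simp only [SimpleGraph.Walk.support_cons, SimpleGraph.Walk.support_nil,
      List.tail_cons, List.nodup_cons, List.mem_cons, List.mem_singleton,
      List.not_mem_nil, List.nodup_nil, or_false, and_true] at hnd
    push_neg at hnd
    refine ⟨a, b, d, h1.1, Ne.symm hnd.2.1.2, Ne.symm hnd.2.2.1, hnd.1.1, hnd.1.2.1,
      hnd.2.1.1, by simp [cycleEdges, symEdge]⟩

lemma isCycle_four (G : SimpleGraph V) (x0 a y d : V)
    (n1 : x0 ≠ a) (n2 : x0 ≠ y) (n3 : x0 ≠ d) (n4 : a ≠ y) (n5 : a ≠ d) (n6 : y ≠ d)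
    (h1 : G.Adj x0 a) (h2 : G.Adj a y) (h3 : G.Adj y d) (h4 : G.Adj d x0) :
    (SimpleGraph.Walk.cons h1 (SimpleGraph.Walk.cons h2 (SimpleGraph.Walk.cons h3
      (SimpleGraph.Walk.cons h4 SimpleGraph.Walk.nil)))).IsCycle := by
  refine ⟨⟨⟨?_⟩, by simp⟩, ?_⟩
  · simp only [SimpleGraph.Walk.edges_cons, SimpleGraph.Walk.edges_nil,
      List.nodup_cons, List.mem_cons, List.not_mem_nil, List.nodup_nil,
      Sym2.eq, Sym2.rel_iff', Prod.mk.injEq, Prod.swap_prod_mk]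
    simp_all
    tauto
  · simp only [SimpleGraph.Walk.support_cons, SimpleGraph.Walk.support_nil,
      List.tail_cons, List.nodup_cons, List.mem_cons, List.not_mem_nil,
      List.mem_singleton, List.nodup_nil, or_false, and_true]
    simp_all
    tauto

end Aux2

section Aux3
open TriSphere SimpleGraph
variable {V : Type} [Fintype V] [DecidableEq V]

/-- In a triangle containing the diagonal `{v,b}`, any edge not on the 4-cycle is the
diagonal itself. -/
lemma edge_in_face (hV : Fintype.card V = 4) (v a b d : V)
    (h1 : v ≠ a) (h2 : v ≠ b) (h3 : v ≠ d) (h4 : a ≠ b) (h5 : a ≠ d) (h6 : b ≠ d)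
    (x e : Finset V) (hx3 : x.card = 3)
    (hvb : ({v,b}:Finset V) ⊆ x) (he : e ⊆ x) (he2 : e.card = 2)
    (heS : e ∉ ({({v,a}:Finset V),{a,b},{b,d},{d,v}} : Finset (Finset V))) :
    e = ({v,b}:Finset V) := by
  have hu := univ_eq4 hV v a b d h1 h2 h3 h4 h5 h6
  have h1c : (x \ {v,b}).card = 1 := by
    rw [Finset.card_sdiff_of_subset hvb, hx3, Finset.card_pair h2]
  obtain ⟨w, hw⟩ := Finset.card_eq_one.1 h1c
  have hwx : w ∈ x \ {v,b} := hw ▸ Finset.mem_singleton_self w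
  rw [Finset.mem_sdiff, Finset.mem_insert, Finset.mem_singleton] at hwx
  have hxw : x = {w,v,b} := by
    have hun := Finset.sdiff_union_of_subset hvb
    rw [hw, ← Finset.insert_eq] at hun
    exact hun.symm
  have hwu : w ∈ ({v,a,b,d}:Finset V) := hu ▸ Finset.mem_univ w
  simp only [Finset.mem_insert, Finset.mem_singleton] at hwu
  have hwad : w = a ∨ w = d := by tauto
  obtain ⟨p, q, hpq, rfl⟩ := Finset.card_eq_two.1 he2
  rw [hxw] at he
  have hp : p ∈ ({w,v,b}:Finset V) := he (by simp)
  have hq : q ∈ ({w,v,b}:Finset V) := he (by simp)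
  simp only [Finset.mem_insert, Finset.mem_singleton] at hp hq heS
  push_neg at heS
  obtain ⟨hs1, hs2, hs3, hs4⟩ := heS
  simp only [pairEq] at hs1 hs2 hs3 hs4 ⊢
  rcases hwad with rfl|rfl <;> rcases hp with rfl|rfl|rfl <;>
    rcases hq with rfl|rfl|rfl <;> simp_all [pairEq]

/-- The complement of the matching `{{x0,y}, univ \ {x0,y}}` in all edges of `K4`. -/
def diagSet (x0 y : V) : Finset (Finset V) :=
  (Finset.univ : Finset V).powersetCard 2 \ {({x0,y}:Finset V), Finset.univ \ {x0,y}}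

end Aux3

open TriSphere in
/-- In the tetrahedral triangulation of the 2-sphere (4 vertices, all four
triples being faces), there are exactly three embedded cycles of length four in the
1-skeleton (counted by their edge sets), and each is an unstable geodesic. -/
theorem tetrahedron_three_unstable_four_cycles {V : Type} [Fintype V] [DecidableEq V]
    (T : SphereTri V) (hV : Fintype.card V = 4)
    (hfaces : T.faces = Finset.univ.powersetCard 3) :
    Set.ncard {S : Finset (Finset V) | ∃ (v : V) (c : (skel T).Walk v v),
        c.IsCycle ∧ c.length = 4 ∧ cycleEdges T c = S} = 3 ∧
      ∀ (v : V) (c : (skel T).Walk v v), c.IsCycle → c.length = 4 →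
        UnstableGeodesic T c := by
  have hNE : Nonempty V := by
    rw [← Fintype.card_pos_iff, hV]; norm_num
  obtain ⟨x0⟩ := hNE
  constructor
  · -- counting: the set of 4-cycle edge sets is the image of `diagSet x0`
    have hSet : {S : Finset (Finset V) | ∃ (v : V) (c : (skel T).Walk v v),
        c.IsCycle ∧ c.length = 4 ∧ cycleEdges T c = S}
        = ↑((Finset.univ.erase x0).image (fun y => diagSet x0 y)) := by
      ext S
      simp only [Set.mem_setOf_eq, Finset.coe_image, Set.mem_image, Finset.mem_coe,
        Finset.mem_erase, Finset.mem_univ, and_true]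
      constructor
      · rintro ⟨v, c, hc, hl, rfl⟩
        obtain ⟨a, b, d, h1, h2, h3, h4, h5, h6, hS⟩ := cycle_struct T c hc hl
        rw [hS, S_formula hV v a b d h1 h2 h3 h4 h5 h6]
        have hx0 : x0 ∈ ({v,a,b,d}:Finset V) :=
          (univ_eq4 hV v a b d h1 h2 h3 h4 h5 h6) ▸ Finset.mem_univ x0
        simp only [Finset.mem_insert, Finset.mem_singleton] at hx0
        rcases hx0 with rfl|rfl|rfl|rfl
        · refine ⟨b, Ne.symm h2, ?_⟩
          unfold diagSet
          rw [compl_pair hV _ a b d h1 h2 h3 h4 h5 h6]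
        · refine ⟨d, Ne.symm h5, ?_⟩
          unfold diagSet
          rw [compl_pair hV _ v d b (Ne.symm h1) h5 h4 h3 h2 (Ne.symm h6)]
          congr 1
          exact Finset.pair_comm _ _
        · refine ⟨v, h2, ?_⟩
          unfold diagSet
          rw [Finset.pair_comm _ v, compl_pair hV v a _ d h1 h2 h3 h4 h5 h6]
        · refine ⟨a, h5, ?_⟩
          unfold diagSet
          rw [Finset.pair_comm _ a, compl_pair hV a v _ b (Ne.symm h1) h5 h4 h3 h2 (Ne.symm h6)]
          congr 1
          exact Finset.pair_comm _ _
      · rintro ⟨y, hyx, rfl⟩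
        have hcompl : ((Finset.univ : Finset V) \ {x0,y}).card = 2 := by
          rw [Finset.card_sdiff_of_subset (Finset.subset_univ _), Finset.card_univ, hV,
            Finset.card_pair (Ne.symm hyx)]
        obtain ⟨a, d, had, hAD⟩ := Finset.card_eq_two.1 hcompl
        have ha : a ∈ (Finset.univ : Finset V) \ {x0,y} := by rw [hAD]; simp
        have hd : d ∈ (Finset.univ : Finset V) \ {x0,y} := by rw [hAD]; simp
        simp only [Finset.mem_sdiff, Finset.mem_insert, Finset.mem_singleton,
          Finset.mem_univ, true_and] at ha hd
        push_neg at ha hd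
        obtain ⟨hax0, hay⟩ := ha
        obtain ⟨hdx0, hdy⟩ := hd
        have n1 : x0 ≠ a := Ne.symm hax0
        have n2 : x0 ≠ y := Ne.symm hyx
        have n3 : x0 ≠ d := Ne.symm hdx0
        have n4 : a ≠ y := hay
        have n5 : a ≠ d := had
        have n6 : y ≠ d := Ne.symm hdy
        refine ⟨x0, SimpleGraph.Walk.cons (adj_of_ne T hV hfaces n1)
          (SimpleGraph.Walk.cons (adj_of_ne T hV hfaces n4)
          (SimpleGraph.Walk.cons (adj_of_ne T hV hfaces n6)
          (SimpleGraph.Walk.cons (adj_of_ne T hV hfaces (Ne.symm n3))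
            SimpleGraph.Walk.nil))),
          isCycle_four _ x0 a y d n1 n2 n3 n4 n5 n6 _ _ _ _, by simp, ?_⟩
        unfold diagSet
        rw [hAD, ← S_formula hV x0 a y d n1 n2 n3 n4 n5 n6]
        simp [cycleEdges, symEdge]
    rw [hSet, Set.ncard_coe_finset, Finset.card_image_of_injOn, 
      Finset.card_erase_of_mem (Finset.mem_univ x0), Finset.card_univ, hV]
    intro y hy y' hy' heq
    by_contra hne
    have hyx : y ≠ x0 := (Finset.mem_erase.1 (Finset.mem_coe.1 hy)).1
    have hy'x : y' ≠ x0 := (Finset.mem_erase.1 (Finset.mem_coe.1 hy')).1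
    have hxy : x0 ≠ y := Ne.symm hyx
    have hne' : y' ≠ y := fun h => hne h.symm
    have hmem : ({x0,y'} : Finset V) ∈ diagSet x0 y := by
      unfold diagSet
      simp only [Finset.mem_sdiff, Finset.mem_powersetCard, Finset.mem_insert,
        Finset.mem_singleton]
      refine ⟨⟨Finset.subset_univ _, Finset.card_pair (Ne.symm hy'x)⟩, ?_⟩
      push_neg
      constructor
      · simp only [ne_eq, pairEq]
        tauto
      · intro h
        have hx : x0 ∈ (Finset.univ : Finset V) \ {x0,y} := h ▸ (by simp : x0 ∈ ({x0,y'}:Finset V))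
        simp at hx
    have hnmem : ({x0,y'} : Finset V) ∉ diagSet x0 y' := by
      unfold diagSet
      simp
    have heq' : diagSet x0 y = diagSet x0 y' := heq
    rw [heq'] at hmem
    exact hnmem hmem
  · -- every 4-cycle is an unstable geodesic
    intro v c hc hl
    obtain ⟨a, b, d, h1, h2, h3, h4, h5, h6, hS⟩ := cycle_struct T c hc hl
    have hfmem : ∀ x : Finset V, x.card = 3 → x ∈ T.faces := fun x hx => by
      rw [hfaces, Finset.mem_powersetCard]; exact ⟨Finset.subset_univ _, hx⟩
    have hface3 : ∀ x ∈ T.faces, x.card = 3 := fun x hx => by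
      rw [hfaces, Finset.mem_powersetCard] at hx; exact hx.2
    have h1' : a ≠ v := Ne.symm h1
    have h2' : b ≠ v := Ne.symm h2
    have h3' : d ≠ v := Ne.symm h3
    have h4' : b ≠ a := Ne.symm h4
    have h5' : d ≠ a := Ne.symm h5
    have h6' : d ≠ b := Ne.symm h6
    have inv : ∀ f g : Finset V, SameSide T c f g →
        ({v,b}:Finset V) ⊆ f → ({v,b}:Finset V) ⊆ g := by
      intro f g hss hf
      have hss' : Relation.ReflTransGen
          (fun x y : Finset V => x ∈ T.faces ∧ y ∈ T.faces ∧ (x ∩ y).card = 2 ∧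
            (x ∩ y) ∉ cycleEdges T c) f g := hss
      clear hss
      induction hss' with
      | refl => exact hf
      | tail hinit hstep ih =>
        obtain ⟨hxF, hyF, hcard2, hnotin⟩ := hstep
        rw [hS] at hnotin
        have hkey := edge_in_face hV v a b d h1 h2 h3 h4 h5 h6 _ _
          (hface3 _ hxF) ih Finset.inter_subset_left hcard2 hnotin
        exact hkey ▸ Finset.inter_subset_right
    have hfin : ({v,a,b}:Finset V) ∈ T.faces := hfmem _ (by
      rw [Finset.card_insert_of_notMem (by simp [h1, h2]), Finset.card_pair h4])
    have hgin : ({a,b,d}:Finset V) ∈ T.faces := hfmem _ (by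
      rw [Finset.card_insert_of_notMem (by simp [h4, h5]), Finset.card_pair h6])
    have hsf : Shortens T c {v,a,b} := by
      refine ⟨hfin, ?_⟩
      have hFE : faceEdges ({v,a,b}:Finset V) = {({v,a}:Finset V),{v,b},{a,b}} :=
        tri_edges v a b h1 h2 h4
      rw [hFE, hS]
      have hint : ({({v,a}:Finset V),{v,b},{a,b}} : Finset (Finset V)) ∩
          ({({v,a}:Finset V),{a,b},{b,d},{d,v}}) = {({v,a}:Finset V),{a,b}} := by
        ext t
        simp only [Finset.mem_inter, Finset.mem_insert, Finset.mem_singleton]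
        constructor
        · rintro ⟨(rfl|rfl|rfl), ht⟩ <;> first | rfl | simp_all [pairEq]
        · rintro (rfl|rfl) <;> first | rfl | simp_all [pairEq]
      rw [hint]
      exact Finset.card_pair (by simp only [ne_eq, pairEq]; tauto)
    have hsg : Shortens T c {a,b,d} := by
      refine ⟨hgin, ?_⟩
      have hFE : faceEdges ({a,b,d}:Finset V) = {({a,b}:Finset V),{a,d},{b,d}} :=
        tri_edges a b d h4 h5 h6
      rw [hFE, hS]
      have hint : ({({a,b}:Finset V),{a,d},{b,d}} : Finset (Finset V)) ∩
          ({({v,a}:Finset V),{a,b},{b,d},{d,v}}) = {({a,b}:Finset V),{b,d}} := by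
        ext t
        simp only [Finset.mem_inter, Finset.mem_insert, Finset.mem_singleton]
        constructor
        · rintro ⟨(rfl|rfl|rfl), ht⟩ <;> first | rfl | simp_all [pairEq]
        · rintro (rfl|rfl) <;> first | rfl | simp_all [pairEq]
      rw [hint]
      exact Finset.card_pair (by simp only [ne_eq, pairEq]; tauto)
    have hopp : OppSides T c {v,a,b} {a,b,d} := by
      refine ⟨hfin, hgin, fun hss => ?_⟩
      have hvb : ({v,b}:Finset V) ⊆ {v,a,b} := by
        intro t ht
        simp only [Finset.mem_insert, Finset.mem_singleton] at ht ⊢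
        tauto
      have hvin : v ∈ ({a,b,d}:Finset V) := inv _ _ hss hvb (by simp)
      simp only [Finset.mem_insert, Finset.mem_singleton] at hvin
      tauto
    refine ⟨hc, ⟨{v,a,b}, {a,b,d}, hsf, hsg, hopp⟩, ?_⟩
    intro f g hf hg hop
    have hne : f ≠ g := by
      rintro rfl
      exact hop.2.2 Relation.ReflTransGen.refl
    have hf3 := hface3 f hf.1
    have hg3 := hface3 g hg.1
    have hub : (f ∪ g).card ≤ 4 := by
      have := Finset.card_le_univ (f ∪ g)
      rwa [hV] at this
    have hsum := Finset.card_union_add_card_inter f g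
    have hle3 : (f ∩ g).card ≤ 3 := by
      calc (f ∩ g).card ≤ f.card := Finset.card_le_card Finset.inter_subset_left
        _ = 3 := hf3
    have hi2 : (f ∩ g).card = 2 := by
      rcases Nat.lt_or_ge (f ∩ g).card 3 with h|h
      · omega
      · exfalso
        have hfg : f ∩ g = f :=
          Finset.eq_of_subset_of_card_le Finset.inter_subset_left (by omega)
        have hsub : f ⊆ g := by rw [← hfg]; exact Finset.inter_subset_right
        exact hne (Finset.eq_of_subset_of_card_le hsub (by omega))
    by_cases hmem : (f ∩ g) ∈ cycleEdges T c
    · exact ⟨f ∩ g, hmem, Finset.inter_subset_left, Finset.inter_subset_right⟩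
    · exact absurd (Relation.ReflTransGen.single ⟨hf.1, hg.1, hi2, hmem⟩) hop.2.2
end
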